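/- Let n ≥ 3 and let Q_{2^n} = ⟨a, b | a^{2^{n-1}} = 1, a^{2^{n-2}} = b^2, b^{-1}ab = a^{-1}⟩ be the generalized quaternion group of order 2^n. Then m*(Q_{2^n}) = 2^{2n-2}. -/

import Mathlib

/-- The Chermak–Delgado measure of a subgroup `H` of `G`: `m_G(H) = |H| * |C_G(H)|`. -/
noncomputable def cdMeasure {G : Type*} [Group G] (H : Subgroup G) : ℕ :=
  Nat.card H * Nat.card (Subgroup.centralizer (H : Set G))

/-- `m*(G)`, the maximal Chermak–Delgado measure over all subgroups of `G`. -/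
noncomputable def cdMax (G : Type*) [Group G] : ℕ :=
  sSup (Set.range (cdMeasure (G := G)))

/-- The Chermak–Delgado lattice of `G`, as the set of subgroups attaining `m*(G)`. -/
def cdLattice (G : Type*) [Group G] : Set (Subgroup G) :=
  {H : Subgroup G | cdMeasure H = cdMax G}

namespace CDAux

open QuaternionGroup Subgroup

variable {m : ℕ}

theorem a_inv (i : ZMod (2 * m)) : (a i : QuaternionGroup m)⁻¹ = a (-i) := by
  rw [eq_comm, eq_inv_iff_mul_eq_one, a_mul_a, neg_add_cancel, one_def]

theorem a_one_zpow (k : ℤ) :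
    (a 1 : QuaternionGroup m) ^ k = a (k : ZMod (2 * m)) := by
  obtain ⟨k, rfl | rfl⟩ := k.eq_nat_or_neg
  · rw [zpow_natCast, a_one_pow]
    norm_cast
  · rw [zpow_neg, zpow_natCast, a_one_pow, a_inv]
    congr 1
    push_cast
    ring

theorem a_mem_zpowers [NeZero m] (i : ZMod (2 * m)) :
    (a i : QuaternionGroup m) ∈ Subgroup.zpowers (a 1) := by
  refine Subgroup.mem_zpowers_iff.mpr ⟨(i.val : ℤ), ?_⟩
  rw [a_one_zpow]
  congr 1
  push_cast
  exact ZMod.natCast_zmod_val i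

theorem xa_not_mem_zpowers (i : ZMod (2 * m)) :
    (xa i : QuaternionGroup m) ∉ Subgroup.zpowers (a 1) := by
  intro hmem
  obtain ⟨k, hk⟩ := Subgroup.mem_zpowers_iff.mp hmem
  rw [a_one_zpow] at hk
  cases hk

theorem two_ne_zero' (hm : 2 ≤ m) : ((2 : ℕ) : ZMod (2 * m)) ≠ 0 := by
  intro h
  rw [ZMod.natCast_eq_zero_iff] at h
  have := Nat.le_of_dvd (by norm_num) h
  omega

theorem centralizer_zpowers_a_one (hm : 2 ≤ m) :
    Subgroup.centralizer ((Subgroup.zpowers (a 1 : QuaternionGroup m)) :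
        Set (QuaternionGroup m)) =
      Subgroup.zpowers (a 1) := by
  haveI : NeZero m := ⟨by omega⟩
  apply le_antisymm
  · intro x hx
    rw [Subgroup.mem_centralizer_iff] at hx
    have h1 := hx (a 1) (Subgroup.mem_zpowers _)
    cases x with
    | a j => exact a_mem_zpowers j
    | xa j =>
      exfalso
      simp only [a_mul_xa, xa_mul_a] at h1
      injection h1 with h
      apply two_ne_zero' hm
      push_cast
      linear_combination -h
  · intro x hx
    obtain ⟨k, rfl⟩ := Subgroup.mem_zpowers_iff.mp hx
    rw [Subgroup.mem_centralizer_iff]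
    intro h hh
    obtain ⟨l, rfl⟩ := Subgroup.mem_zpowers_iff.mp hh
    rw [a_one_zpow, a_one_zpow, a_mul_a, a_mul_a, add_comm]

theorem center_subset (hm : 2 ≤ m) :
    ((Subgroup.center (QuaternionGroup m)) : Set (QuaternionGroup m)) ⊆
      {a 0, a (m : ZMod (2 * m))} := by
  haveI : NeZero m := ⟨by omega⟩
  intro x hx
  rw [SetLike.mem_coe, Subgroup.mem_center_iff] at hx
  cases x with
  | xa j =>
    exfalso
    have h1 := hx (a 1)
    simp only [a_mul_xa, xa_mul_a] at h1
    injection h1 with h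
    apply two_ne_zero' hm
    push_cast
    linear_combination -h
  | a i =>
    have h1 := hx (xa 0)
    simp only [xa_mul_a, a_mul_xa] at h1
    injection h1 with h
    -- h : 0 + i = 0 - i
    have h2 : ((2 * i.val : ℕ) : ZMod (2 * m)) = 0 := by
      push_cast
      rw [ZMod.natCast_zmod_val]
      linear_combination h
    rw [ZMod.natCast_eq_zero_iff] at h2
    obtain ⟨c, hc⟩ := h2
    have hdvd : i.val = m * c :=
      Nat.eq_of_mul_eq_mul_left (by norm_num) (hc.trans (by ring))
    have hlt : i.val < 2 * m := ZMod.val_lt i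
    have hc2 : c = 0 ∨ c = 1 := by
      rcases Nat.lt_or_ge c 2 with h' | h'
      · omega
      · exfalso; nlinarith
    have hi : i = ((i.val : ℕ) : ZMod (2 * m)) := (ZMod.natCast_zmod_val i).symm
    rcases hc2 with rfl | rfl
    · left
      rw [hi]
      simp [hdvd]
    · right
      rw [hi, hdvd, mul_one]
      exact rfl

theorem card_center_le (hm : 2 ≤ m) :
    Nat.card (Subgroup.center (QuaternionGroup m)) ≤ 2 := by
  haveI : NeZero m := ⟨by omega⟩
  have h := Nat.card_mono (Set.toFinite _) (center_subset hm)
  refine h.trans ?_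
  rw [Nat.card_coe_set_eq]
  refine (Set.ncard_insert_le _ _).trans ?_
  simp [Set.ncard_singleton]

end CDAux

/-- For `n ≥ 3`, the generalized quaternion group `Q_{2^n}` (of order `2^n`, realized as the
dicyclic group `QuaternionGroup (2^(n-2))`) satisfies `m*(Q_{2^n}) = 2^(2n-2)`. -/
theorem cdMax_quaternionGroup (n : ℕ) (hn : 3 ≤ n) :
    cdMax (QuaternionGroup (2 ^ (n - 2))) = 2 ^ (2 * n - 2) := by
  set m : ℕ := 2 ^ (n - 2) with hm_def
  have hm : 2 ≤ m := by
    have : 1 ≤ n - 2 := by omega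
    calc 2 = 2 ^ 1 := rfl
    _ ≤ 2 ^ (n - 2) := Nat.pow_le_pow_right (by norm_num) this
  haveI : NeZero m := ⟨by omega⟩
  -- cardinality of G
  have hcardG : Nat.card (QuaternionGroup m) = 2 ^ n := by
    rw [Nat.card_eq_fintype_card, QuaternionGroup.card, hm_def,
      show (4 : ℕ) = 2 ^ 2 by norm_num, ← pow_add]
    congr 1
    omega
  -- proper subgroups have card ≤ 2^(n-1)
  have hproper : ∀ K : Subgroup (QuaternionGroup m), K ≠ ⊤ → Nat.card K ≤ 2 ^ (n - 1) := by
    intro K hK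
    have hdvd : Nat.card K ∣ 2 ^ n := hcardG ▸ Subgroup.card_subgroup_dvd_card K
    obtain ⟨j, hj, hje⟩ := (Nat.dvd_prime_pow Nat.prime_two).mp hdvd
    have hjn : j ≠ n := by
      rintro rfl
      exact hK (Subgroup.eq_top_of_card_eq K (hje.trans hcardG.symm))
    rw [hje]
    exact Nat.pow_le_pow_right (by norm_num) (by omega)
  -- general card bound
  have hcard_le : ∀ K : Subgroup (QuaternionGroup m), Nat.card K ≤ 2 ^ n := by
    intro K
    exact hcardG ▸ Subgroup.card_le_card_group K
  -- upper bound for the measure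
  have hub : ∀ H : Subgroup (QuaternionGroup m), cdMeasure H ≤ 2 ^ (2 * n - 2) := by
    intro H
    have key : cdMeasure H ≤ 2 ^ (n + 1) ∨ cdMeasure H ≤ 2 ^ (n - 1) * 2 ^ (n - 1) := by
      by_cases hH : H = ⊤
      · left
        subst hH
        have h1 : Subgroup.centralizer ((⊤ : Subgroup (QuaternionGroup m)) :
            Set (QuaternionGroup m)) = Subgroup.center (QuaternionGroup m) := by
          rw [Subgroup.coe_top, Subgroup.centralizer_univ]
        unfold cdMeasure
        rw [h1]
        calc Nat.card (⊤ : Subgroup (QuaternionGroup m)) *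
              Nat.card (Subgroup.center (QuaternionGroup m))
            ≤ 2 ^ n * 2 := Nat.mul_le_mul (hcard_le _) (CDAux.card_center_le hm)
          _ = 2 ^ (n + 1) := by ring
      · by_cases hZ : H ≤ Subgroup.center (QuaternionGroup m)
        · left
          unfold cdMeasure
          calc Nat.card H * Nat.card (Subgroup.centralizer (H : Set (QuaternionGroup m)))
              ≤ 2 * 2 ^ n := Nat.mul_le_mul
                ((Subgroup.card_le_of_le hZ).trans (CDAux.card_center_le hm)) (hcard_le _)
            _ = 2 ^ (n + 1) := by ring
        · right
          obtain ⟨g, hgH, hgZ⟩ := SetLike.not_le_iff_exists.mp hZ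
          have hcent : Subgroup.centralizer (H : Set (QuaternionGroup m)) ≠ ⊤ := by
            intro htop
            have : (H : Set (QuaternionGroup m)) ⊆ Subgroup.center (QuaternionGroup m) :=
              Subgroup.centralizer_eq_top_iff_subset.mp htop
            exact hgZ (this hgH)
          unfold cdMeasure
          exact Nat.mul_le_mul (hproper H hH) (hproper _ hcent)
    have h1 : 2 ^ (n + 1) ≤ 2 ^ (2 * n - 2) :=
      Nat.pow_le_pow_right (by norm_num) (by omega)
    have h2 : 2 ^ (n - 1) * 2 ^ (n - 1) = 2 ^ (2 * n - 2) := by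
      rw [← pow_add]
      congr 1
      omega
    rcases key with h | h
    · exact h.trans h1
    · exact h.trans_eq h2
  -- the witness subgroup
  have hwit : cdMeasure (Subgroup.zpowers (QuaternionGroup.a 1 : QuaternionGroup m)) =
      2 ^ (2 * n - 2) := by
    unfold cdMeasure
    rw [CDAux.centralizer_zpowers_a_one hm, Nat.card_zpowers, QuaternionGroup.orderOf_a_one]
    have h2m : 2 * m = 2 ^ (n - 1) := by
      rw [hm_def, show (2:ℕ) * 2 ^ (n - 2) = 2 ^ (1 + (n - 2)) by rw [pow_add, pow_one]]
      congr 1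
      omega
    rw [h2m, ← pow_add]
    congr 1
    omega
  apply le_antisymm
  · apply csSup_le (Set.range_nonempty _)
    rintro x ⟨H, rfl⟩
    exact hub H
  · apply le_csSup
    · refine ⟨2 ^ (2 * n - 2), ?_⟩
      rintro x ⟨H, rfl⟩
      exact hub H
    · exact ⟨Subgroup.zpowers (QuaternionGroup.a 1 : QuaternionGroup m), hwit⟩
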